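/- For j ≥ 1, if a binary word ω with |ω|_0 = |ω|_1 avoids the factor (10)^j1 and does not end with (10)^{j-1}1 as the final part of a suffix of the form 0η1(01)^{j-1} with η negative, and does not end with (10)^j, then for every 1 ≤ h ≤ j the word ω·0·(01)^{h-1}·1 avoids the factor (10)^j1 and satisfies |number of 0's| = |number of 1's|. -/

import Mathlib

/-- The pattern `(10)^j 1` (`true` = 1, `false` = 0). -/
def pat (j : ℕ) : List Bool := (List.replicate j [true, false]).flatten ++ [true]

/-- `(10)^j`. -/
def alt (j : ℕ) : List Bool := (List.replicate j [true, false]).flatten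

/-- `(01)^j`. -/
def alt' (j : ℕ) : List Bool := (List.replicate j [false, true]).flatten

def ht (w : List Bool) : ℤ := (w.count true : ℤ) - (w.count false : ℤ)

/-- A word is negative (as a path) if it stays weakly below the x-axis and
returns to height 0. -/
def Negative (w : List Bool) : Prop := ht w = 0 ∧ ∀ p, p <+: w → ht p ≤ 0

lemma alt'_succ (k : ℕ) : alt' (k + 1) = false :: true :: alt' k := by
  simp [alt', List.replicate_succ]

lemma alt_succ (k : ℕ) : alt (k + 1) = true :: false :: alt k := by
  simp [alt, List.replicate_succ]

lemma alt_succ' (k : ℕ) : alt (k + 1) = alt k ++ [true, false] := by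
  simp [alt, List.replicate_succ']

lemma pat_eq_alt (j : ℕ) : pat j = alt j ++ [true] := rfl

lemma alt_append_true (k : ℕ) : alt k ++ [true] = true :: alt' k := by
  induction k with
  | zero => simp [alt, alt']
  | succ n ih =>
    rw [alt_succ, alt'_succ]
    simp only [List.cons_append, ih]

lemma pat_eq_cons (j : ℕ) : pat j = true :: alt' j := by
  rw [pat_eq_alt, alt_append_true]

lemma alt'_count_false (k : ℕ) : (alt' k).count false = k := by
  induction k with
  | zero => simp [alt']
  | succ n ih => rw [alt'_succ]; simp [ih]

lemma alt'_count_true (k : ℕ) : (alt' k).count true = k := by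
  induction k with
  | zero => simp [alt']
  | succ n ih => rw [alt'_succ]; simp [ih]

lemma alt'_length (k : ℕ) : (alt' k).length = 2 * k := by
  induction k with
  | zero => simp [alt']
  | succ n ih => rw [alt'_succ]; simp [ih]; ring

lemma pat_length (j : ℕ) : (pat j).length = 2 * j + 1 := by
  rw [pat_eq_cons]; simp [alt'_length]

lemma ht_append (a b : List Bool) : ht (a ++ b) = ht a + ht b := by
  simp [ht, List.count_append]; ring

lemma ht_cons (c : Bool) (s : List Bool) :
    ht (c :: s) = (if c then 1 else -1) + ht s := by
  cases c <;> simp [ht, List.count_cons] <;> ring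

lemma ht_nil : ht [] = 0 := by simp [ht]

lemma ht_alt' (k : ℕ) : ht (alt' k) = 0 := by
  induction k with
  | zero => simp [alt', ht]
  | succ n ih => rw [alt'_succ, ht_cons, ht_cons, ih]; norm_num

lemma chain'_pat (j : ℕ) : (pat j).Chain' (· ≠ ·) := by
  rw [pat_eq_cons]
  induction j with
  | zero => simp [alt', List.Chain', List.isChain_singleton]
  | succ n ih =>
    rw [alt'_succ]
    rcases n with _ | m
    · simp [alt', List.Chain', List.isChain_cons_cons, List.isChain_singleton]
    · rw [alt'_succ] at ih ⊢
      exact List.IsChain.cons_cons (by simp) (List.IsChain.cons_cons (by simp) ih)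

/-- Decomposition of a word of negative height. -/
lemma neg_decomp : ∀ (n : ℕ) (s : List Bool), s.length ≤ n → ht s ≤ -1 →
    ∃ μ η, s = μ ++ [false] ++ η ∧ Negative η := by
  intro n
  induction n with
  | zero =>
    intro s hl hht
    rw [List.length_eq_zero_iff.mp (Nat.le_zero.mp hl)] at hht
    simp [ht_nil] at hht
  | succ n ih =>
    intro s hl hht
    match s with
    | [] => simp [ht_nil] at hht
    | c :: s' =>
      simp only [List.length_cons, Nat.add_le_add_iff_right] at hl
      rw [ht_cons] at hht
      cases c with
      | true =>
        obtain ⟨μ, η, he, hn⟩ := ih s' hl (by simp at hht; linarith)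
        exact ⟨true :: μ, η, by simp [he], hn⟩
      | false =>
        norm_num at hht
        by_cases h1 : ht s' ≤ -1
        · obtain ⟨μ, η, he, hn⟩ := ih s' hl h1
          exact ⟨false :: μ, η, by simp [he], hn⟩
        · push_neg at h1
          by_cases hex : ∃ p, p <+: s' ∧ 1 ≤ ht p
          · obtain ⟨p, ⟨q, hq⟩, hp1⟩ := hex
            have hqlen : q.length ≤ n := by
              have := congrArg List.length hq
              simp at this; omega
            have hqht : ht q ≤ -1 := by
              have := congrArg ht hq
              rw [ht_append] at this
              omega
            obtain ⟨μ, η, he, hn⟩ := ih q hqlen hqht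
            exact ⟨false :: p ++ μ, η, by simp [← hq, he], hn⟩
          · push_neg at hex
            refine ⟨[], s', by simp, ?_, ?_⟩
            · have : ht s' ≤ 0 := by omega
              omega
            · intro p hp
              have := hex p hp
              omega

/-- suffix of suffix with smaller length. -/
lemma suffix_of_suffix_le {α : Type*} {l₁ l₂ l₃ : List α}
    (h1 : l₁ <:+ l₃) (h2 : l₂ <:+ l₃) (h : l₁.length ≤ l₂.length) : l₁ <:+ l₂ := by
  rw [← List.reverse_prefix] at h1 h2 ⊢
  exact List.prefix_of_prefix_length_le h1 h2 (by simpa using h)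

theorem stmt3 (j : ℕ) (hj : 1 ≤ j) (ω : List Bool)
    (hzero : ω.count false = ω.count true)
    (havoid : ¬ pat j <:+: ω)
    (hsuf1 : ¬ ∃ μ η, Negative η ∧
        ω = μ ++ [false] ++ η ++ [true] ++ alt' (j - 1))
    (hsuf2 : ¬ alt j <:+ ω) :
    ∀ h, 1 ≤ h → h ≤ j →
      ¬ pat j <:+: (ω ++ [false] ++ alt' (h - 1) ++ [true]) ∧
      (ω ++ [false] ++ alt' (h - 1) ++ [true]).count false
        = (ω ++ [false] ++ alt' (h - 1) ++ [true]).count true := by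
  intro h h1 hhj
  constructor
  · rintro ⟨s, t, heq⟩
    set A : List Bool := [false] ++ alt' (h - 1) ++ [true] with hA
    have hAlen : A.length = 2 * h := by
      simp [hA, alt'_length]; omega
    have heq' : ω ++ A = s ++ pat j ++ t := by
      rw [heq]; simp [hA]
    by_cases ht1 : A.length ≤ t.length
    · -- pat occurs inside ω
      apply havoid
      have hpre : s ++ pat j <+: ω ++ A := ⟨t, by rw [← heq']⟩
      have hlen : (s ++ pat j).length ≤ ω.length := by
        have := congrArg List.length heq'
        simp only [List.length_append] at this ⊢
        omega
      have : s ++ pat j <+: ω :=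
        List.prefix_of_prefix_length_le hpre (List.prefix_append ω A) hlen
      obtain ⟨u, hu⟩ := this
      exact ⟨s, u, by rw [← hu, List.append_assoc]⟩
    · push_neg at ht1
      -- t is a proper suffix of A
      have htA : t <:+ A := by
        refine suffix_of_suffix_le ⟨s ++ pat j, heq'.symm⟩
          (List.suffix_append ω A) (le_of_lt ht1)
      obtain ⟨B, hB⟩ := htA
      have hcanc : ω ++ B = s ++ pat j := by
        have : (ω ++ B) ++ t = (s ++ pat j) ++ t := by
          rw [List.append_assoc, hB, heq', List.append_assoc]
        exact List.append_cancel_right this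
      have hBsufpat : B <:+ pat j := by
        have h1' : B <:+ ω ++ B := List.suffix_append ω B
        have h2' : pat j <:+ ω ++ B := ⟨s, by rw [hcanc]⟩
        refine suffix_of_suffix_le h1' h2' ?_
        have := congrArg List.length hB
        simp only [List.length_append] at this
        rw [pat_length]; omega
      have hBlen : B.length = A.length - t.length := by
        have := congrArg List.length hB
        simp only [List.length_append] at this; omega
      match B, hB with
      | [], hB =>
        have := congrArg List.length hB
        simp at this
        omega
      | [b], hB =>
        -- b = false from prefix of A, but pat ends with true
        have hb : b = false := by
          rw [hA] at hB
          simpa using congrArg (·.head?) hB.symm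
        subst hb
        obtain ⟨u, hu⟩ := hBsufpat
        rw [pat_eq_alt] at hu
        have := (List.append_inj' hu (by simp)).2
        simp at this
      | b₁ :: b₂ :: r, hB =>
        have hb₁ : b₁ = false := by
          rw [hA] at hB
          simpa using congrArg (·.head?) hB.symm
        subst hb₁
        rcases Nat.lt_or_ge 1 h with hh2 | hh1
        · -- h ≥ 2 : A starts with false, false, contradiction with alternation
          have hb₂ : b₂ = false := by
            obtain ⟨k, hk⟩ : ∃ k, h - 1 = k + 1 := ⟨h - 2, by omega⟩
            rw [hA, hk, alt'_succ] at hB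
            simpa using congrArg (fun l : List Bool => l.tail.head?) hB.symm
          subst hb₂
          obtain ⟨u, hu⟩ := hBsufpat
          have : [false, false] <:+: pat j := ⟨u, r, by rw [← hu]; simp⟩
          have := (chain'_pat j).infix this
          simp at this
        · -- h = 1
          have hh : h = 1 := by omega
          subst hh
          have hA1 : A = [false, true] := by simp [hA, alt']
          rw [hA1] at hB
          have hB' : false :: b₂ :: (r ++ t) = [false, true] := by
            simpa using hB.symm
          simp only [List.cons.injEq] at hB'
          obtain ⟨-, hb2, hrt⟩ := hB'
          subst hb2
          have hr : r = [] := (List.append_eq_nil_iff.mp hrt).1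
          subst hr
          -- pat j = alt (j-1) ++ [true, false, true]
          obtain ⟨k, hk⟩ : ∃ k, j = k + 1 := ⟨j - 1, by omega⟩
          have hpatk : pat j = (alt k ++ [true]) ++ [false, true] := by
            rw [pat_eq_alt, hk, alt_succ']
            simp
          rw [hpatk] at hcanc
          have hω : ω = s ++ (alt k ++ [true]) := by
            have : ω ++ [false, true] = (s ++ (alt k ++ [true])) ++ [false, true] := by
              rw [hcanc]; simp
            exact (List.append_inj' this rfl).1
          rw [alt_append_true] at hω
          -- height of s is -1
          have hhtω : ht ω = 0 := by
            simp [ht, hzero]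
          have hhts : ht s ≤ -1 := by
            have := congrArg ht hω
            rw [ht_append, ht_cons, ht_alt'] at this
            simp at this
            omega
          obtain ⟨μ, η, hse, hn⟩ := neg_decomp s.length s le_rfl hhts
          apply hsuf1
          refine ⟨μ, η, hn, ?_⟩
          rw [hω, hse, hk]
          simp
  · simp [List.count_append, alt'_count_false, alt'_count_true, hzero]
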